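/- There exists a finite set S ⊂ ℂ containing 0 such that for every λ ∉ S and every (a,b,c,p) ∈ ℂ⁴ with c ≠ 0 satisfying λp² = −2a, λ²b = 4ac, 12ca³ = (2c³+1)λ, and 64c⁶ − (16λ⁶ − 32)c³ + λ⁶ = 0, the following holds with W = W(a,b,c,p): every vector B ∈ ℂ⁶ such that the directional derivatives satisfy ∇F_λ(P)·B = 0 and ∇G_λ(P)·B = 0 for all P ∈ W must lie in W. (This is the computation showing the normal bundle of the line W on X_λ is not O(1) ⊕ O(−3).) -/

import Mathlib

noncomputable section

/-- The first cubic form defining the (3,3) pencil `X_λ`. -/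
def Fcubic (l : ℂ) (x : Fin 6 → ℂ) : ℂ :=
  x 0 ^ 3 + x 1 ^ 3 + x 2 ^ 3 - 3 * l * x 3 * x 4 * x 5

/-- The second cubic form defining the (3,3) pencil `X_λ`. -/
def Gcubic (l : ℂ) (x : Fin 6 → ℂ) : ℂ :=
  x 3 ^ 3 + x 4 ^ 3 + x 5 ^ 3 - 3 * l * x 0 * x 1 * x 2

/-- The plane `W(a,b,c,p) ⊆ ℂ⁶`, spanned by `(1,−1,0,p,−p,0)` and `(a,a,b,c,c,1)`. -/
def linePlane (a b c p : ℂ) : Submodule ℂ (Fin 6 → ℂ) :=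
  Submodule.span ℂ {![1, -1, 0, p, -p, 0], ![a, a, b, c, c, 1]}

/-- The system of equations characterizing the 36 lines of Lemma 2.3. -/
def lineEqs (l a b c p : ℂ) : Prop :=
  l * p ^ 2 = -2 * a ∧ l ^ 2 * b = 4 * a * c ∧
    12 * c * a ^ 3 = (2 * c ^ 3 + 1) * l ∧
    64 * c ^ 6 - (16 * l ^ 6 - 32) * c ^ 3 + l ^ 6 = 0

/-- The subgroup `G ≤ (ℂˣ)⁶` generated by `α₁, α₂, α₃`, where `ω = ζ³`. -/
def Gsub (z : ℂˣ) : Subgroup (Fin 6 → ℂˣ) :=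
  Subgroup.closure
    {![1, z ^ 3, (z ^ 3)⁻¹, 1, 1, 1],
      ![1, 1, z ^ 3, z, z, (z ^ 2)⁻¹],
      ![1, 1, 1, 1, z ^ 3, (z ^ 3)⁻¹]}

/-- The subgroup `H ≤ S₆` generated by all permutations of the indices `{0,1,2}`
and all permutations of the indices `{3,4,5}`. -/
def Hsub : Subgroup (Equiv.Perm (Fin 6)) :=
  Subgroup.closure
    ({σ : Equiv.Perm (Fin 6) | ∀ i : Fin 6, 3 ≤ (i : ℕ) → σ i = i} ∪
      {σ : Equiv.Perm (Fin 6) | ∀ i : Fin 6, (i : ℕ) < 3 → σ i = i})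

/-- Componentwise multiplication by `g ∈ (ℂˣ)⁶` as a linear automorphism-inducing map. -/
def diagMap (g : Fin 6 → ℂˣ) : (Fin 6 → ℂ) →ₗ[ℂ] (Fin 6 → ℂ) :=
  LinearMap.pi fun i => (g i : ℂ) • LinearMap.proj i

/-- Coordinate permutation `x ↦ x ∘ σ` as a linear map. -/
def permMap (σ : Equiv.Perm (Fin 6)) : (Fin 6 → ℂ) →ₗ[ℂ] (Fin 6 → ℂ) :=
  LinearMap.funLeft ℂ ℂ σ

lemma fderiv_Fcubic (l : ℂ) (P B : Fin 6 → ℂ) :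
    fderiv ℂ (Fcubic l) P B =
      3 * P 0 ^ 2 * B 0 + 3 * P 1 ^ 2 * B 1 + 3 * P 2 ^ 2 * B 2 -
        (3 * l * P 4 * P 5 * B 3 + 3 * l * P 3 * P 5 * B 4 + 3 * l * P 3 * P 4 * B 5) := by
  have hp : ∀ i : Fin 6, HasFDerivAt (fun x : Fin 6 → ℂ => x i)
      (ContinuousLinearMap.proj i : (Fin 6 → ℂ) →L[ℂ] ℂ) P := fun i => hasFDerivAt_apply i P
  have hfun : Fcubic l = fun x : Fin 6 → ℂ =>
      x 0 * (x 0 * x 0) + x 1 * (x 1 * x 1) + x 2 * (x 2 * x 2) - 3 * l * x 3 * x 4 * x 5 := by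
    funext x; simp only [Fcubic]; ring
  have h : HasFDerivAt (fun x : Fin 6 → ℂ =>
      x 0 * (x 0 * x 0) + x 1 * (x 1 * x 1) + x 2 * (x 2 * x 2) - 3 * l * x 3 * x 4 * x 5) _ P :=
    ((((hp 0).mul ((hp 0).mul (hp 0))).add ((hp 1).mul ((hp 1).mul (hp 1)))).add
        ((hp 2).mul ((hp 2).mul (hp 2)))).sub
      ((((hp 3).const_mul (3*l)).mul (hp 4)).mul (hp 5))
  rw [hfun, h.fderiv]
  simp only [ContinuousLinearMap.add_apply, ContinuousLinearMap.sub_apply,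
    ContinuousLinearMap.smul_apply, ContinuousLinearMap.proj_apply, smul_eq_mul, Pi.mul_apply]
  ring

lemma fderiv_Gcubic (l : ℂ) (P B : Fin 6 → ℂ) :
    fderiv ℂ (Gcubic l) P B =
      3 * P 3 ^ 2 * B 3 + 3 * P 4 ^ 2 * B 4 + 3 * P 5 ^ 2 * B 5 -
        (3 * l * P 1 * P 2 * B 0 + 3 * l * P 0 * P 2 * B 1 + 3 * l * P 0 * P 1 * B 2) := by
  have hp : ∀ i : Fin 6, HasFDerivAt (fun x : Fin 6 → ℂ => x i)
      (ContinuousLinearMap.proj i : (Fin 6 → ℂ) →L[ℂ] ℂ) P := fun i => hasFDerivAt_apply i P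
  have hfun : Gcubic l = fun x : Fin 6 → ℂ =>
      x 3 * (x 3 * x 3) + x 4 * (x 4 * x 4) + x 5 * (x 5 * x 5) - 3 * l * x 0 * x 1 * x 2 := by
    funext x; simp only [Gcubic]; ring
  have h : HasFDerivAt (fun x : Fin 6 → ℂ =>
      x 3 * (x 3 * x 3) + x 4 * (x 4 * x 4) + x 5 * (x 5 * x 5) - 3 * l * x 0 * x 1 * x 2) _ P :=
    ((((hp 3).mul ((hp 3).mul (hp 3))).add ((hp 4).mul ((hp 4).mul (hp 4)))).add
        ((hp 5).mul ((hp 5).mul (hp 5)))).sub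
      ((((hp 0).const_mul (3*l)).mul (hp 1)).mul (hp 2))
  rw [hfun, h.fderiv]
  simp only [ContinuousLinearMap.add_apply, ContinuousLinearMap.sub_apply,
    ContinuousLinearMap.smul_apply, ContinuousLinearMap.proj_apply, smul_eq_mul, Pi.mul_apply]
  ring

theorem stmt_10 :
    ∃ S : Finset ℂ, (0 : ℂ) ∈ S ∧ ∀ l : ℂ, l ∉ S →
      ∀ a b c p : ℂ, c ≠ 0 → lineEqs l a b c p →
        ∀ B : Fin 6 → ℂ,
          (∀ P ∈ linePlane a b c p,
            fderiv ℂ (Fcubic l) P B = 0 ∧ fderiv ℂ (Gcubic l) P B = 0) →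
          B ∈ linePlane a b c p := by
  refine ⟨insert (0 : ℂ)
    ((Polynomial.X ^ 6 - Polynomial.C 4 : Polynomial ℂ).roots.toFinset),
    Finset.mem_insert_self _ _, ?_⟩
  intro l hlS a b c p hc hline B hB
  have hl0 : l ≠ 0 := fun h => hlS (h ▸ Finset.mem_insert_self _ _)
  have hl6 : l ^ 6 ≠ 4 := by
    intro h6
    apply hlS
    refine Finset.mem_insert_of_mem (Multiset.mem_toFinset.mpr ?_)
    refine Polynomial.mem_roots'.mpr ⟨Polynomial.X_pow_sub_C_ne_zero (by norm_num) 4, ?_⟩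
    simp [Polynomial.IsRoot, h6]
  obtain ⟨h1, h2, h3, h4⟩ := hline
  -- the two spanning vectors
  set u : Fin 6 → ℂ := ![1, -1, 0, p, -p, 0] with hu_def
  set v : Fin 6 → ℂ := ![a, a, b, c, c, 1] with hv_def
  have humem : u ∈ linePlane a b c p := Submodule.subset_span (Set.mem_insert _ _)
  have hvmem : v ∈ linePlane a b c p :=
    Submodule.subset_span (Set.mem_insert_of_mem _ rfl)
  have huvmem : u + v ∈ linePlane a b c p := Submodule.add_mem _ humem hvmem
  -- entries of u and v
  have hu0 : u 0 = 1 := rfl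
  have hu1 : u 1 = -1 := rfl
  have hu2 : u 2 = 0 := rfl
  have hu3 : u 3 = p := rfl
  have hu4 : u 4 = -p := rfl
  have hu5 : u 5 = 0 := rfl
  have hv0 : v 0 = a := rfl
  have hv1 : v 1 = a := rfl
  have hv2 : v 2 = b := rfl
  have hv3 : v 3 = c := rfl
  have hv4 : v 4 = c := rfl
  have hv5 : v 5 = 1 := rfl
  -- the six linear equations on B
  have hFu := (hB u humem).1
  have hGu := (hB u humem).2
  have hFv := (hB v hvmem).1
  have hGv := (hB v hvmem).2
  have hFw := (hB (u + v) huvmem).1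
  rw [fderiv_Fcubic] at hFu hFv hFw
  rw [fderiv_Gcubic] at hGu hGv
  simp only [Pi.add_apply, hu0, hu1, hu2, hu3, hu4, hu5, hv0, hv1, hv2, hv3, hv4, hv5]
    at hFu hFv hFw hGu hGv
  -- nonvanishing facts
  have ha : a ≠ 0 := by
    intro ha0
    have h9 : (9 : ℂ) * l ^ 7 = 0 := by
      linear_combination l * h4 + (32 * c ^ 3 - 8 * l ^ 6) * h3 -
        (32 * c ^ 3 - 8 * l ^ 6) * 12 * c * a ^ 2 * ha0
    exact hl0 (by
      have : l ^ 7 = 0 := by linear_combination (1 / 9 : ℂ) * h9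
      exact pow_eq_zero_iff (by norm_num) |>.mp this)
  have hpne : p ≠ 0 := by
    intro hp0
    exact ha (by linear_combination (1 / 2 : ℂ) * h1 - (l * p / 2) * hp0)
  -- scalar consequences of the line equations
  have f3 : 3 * l ^ 2 * a ^ 2 * b = (2 * c ^ 3 + 1) * l := by
    linear_combination 3 * a ^ 2 * h2 + h3
  have f4 : 2 * a ^ 3 + b ^ 3 = 3 * l * c ^ 2 := by
    have h12 : (12 * c * l ^ 6) * (2 * a ^ 3 + b ^ 3 - 3 * l * c ^ 2) = 0 := by
      linear_combination (12 * c * (l ^ 4 * b ^ 2 + 4 * a * c * l ^ 2 * b +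
        16 * a ^ 2 * c ^ 2)) * h2 + (2 * l ^ 6 + 64 * c ^ 3) * h3 + 2 * l * h4
    have hne : (12 * c * l ^ 6 : ℂ) ≠ 0 :=
      mul_ne_zero (mul_ne_zero (by norm_num) hc) (pow_ne_zero _ hl0)
    have := (mul_eq_zero.mp h12).resolve_left hne
    linear_combination this
  -- linear consequences on B
  have S1 : B 0 + B 1 = 2 * a * B 5 := by
    linear_combination (1 / 3 : ℂ) * hFu - B 5 * h1
  have S2 : l ^ 2 * B 2 = 2 * a * (B 3 + B 4) := by
    linear_combination (l / 3) * hGu - (B 3 + B 4) * h1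
  have hr : B 3 - B 4 = p * (B 0 - B 1) := by
    have h0 : l * p * ((B 3 - B 4) - p * (B 0 - B 1)) = 0 := by
      linear_combination (1 / 3 : ℂ) * hFw - (1 / 3 : ℂ) * hFu - (1 / 3 : ℂ) * hFv -
        (B 0 - B 1) * h1
    have := (mul_eq_zero.mp h0).resolve_left (mul_ne_zero hl0 hpne)
    linear_combination this
  have T3 : (2 * a * b ^ 2 - l ^ 3 * c) * (B 3 + B 4) =
      l ^ 2 * (l * c ^ 2 - 2 * a ^ 3) * B 5 := by
    linear_combination (l ^ 2 / 3) * hFv - a ^ 2 * l ^ 2 * S1 - b ^ 2 * S2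
  have T6 : 3 * l * (l * c ^ 2 - 2 * a ^ 3) * (B 3 + B 4) =
      l ^ 2 * (4 * c ^ 3 - 1) * B 5 := by
    linear_combination l ^ 2 * hGv + 3 * l ^ 3 * a * b * S1 + 3 * l * a ^ 2 * S2 +
      2 * B 5 * l * f3
  have hw : B 3 + B 4 = 2 * c * B 5 := by
    by_cases hLp : l * c ^ 2 - 2 * a ^ 3 = 0
    · have hL : 2 * a * b ^ 2 - l ^ 3 * c ≠ 0 := by
        intro hL0
        have e1' : l * (4 * c ^ 3 - 1) = 0 := by linear_combination h3 + 6 * c * hLp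
        have e2' : l * c * (16 * c ^ 3 - l ^ 6) = 0 := by
          linear_combination l ^ 4 * hL0 - 2 * a * (l ^ 2 * b + 4 * a * c) * h2 +
            16 * c ^ 2 * hLp
        have e3' : c * l ^ 2 * (l ^ 6 - 4) = 0 := by
          linear_combination -l * e2' + 4 * c * l * e1'
        have := (mul_eq_zero.mp e3').resolve_left
          (mul_ne_zero hc (pow_ne_zero _ hl0))
        exact hl6 (by linear_combination this)
      have h0 : (2 * a * b ^ 2 - l ^ 3 * c) * ((B 3 + B 4) - 2 * c * B 5) = 0 := by
        linear_combination T3 + B 5 * b ^ 2 * h2 - B 5 * l ^ 2 * f4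
      have := (mul_eq_zero.mp h0).resolve_left hL
      linear_combination this
    · have h0 : 3 * l * (l * c ^ 2 - 2 * a ^ 3) * ((B 3 + B 4) - 2 * c * B 5) = 0 := by
        linear_combination T6 + l * B 5 * h3
      have := (mul_eq_zero.mp h0).resolve_left
        (mul_ne_zero (mul_ne_zero (by norm_num) hl0) hLp)
      linear_combination this
  have hz : B 2 = b * B 5 := by
    have h0 : l ^ 2 * (B 2 - b * B 5) = 0 := by
      linear_combination S2 + 2 * a * hw - B 5 * h2
    have := (mul_eq_zero.mp h0).resolve_left (pow_ne_zero _ hl0)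
    linear_combination this
  -- conclude
  have hBrep : B = ((B 0 - B 1) / 2) • u + B 5 • v := by
    funext i
    fin_cases i
    · show B 0 = ((B 0 - B 1) / 2) * u 0 + B 5 * v 0
      rw [hu0, hv0]; linear_combination (1 / 2 : ℂ) * S1
    · show B 1 = ((B 0 - B 1) / 2) * u 1 + B 5 * v 1
      rw [hu1, hv1]; linear_combination (1 / 2 : ℂ) * S1
    · show B 2 = ((B 0 - B 1) / 2) * u 2 + B 5 * v 2
      rw [hu2, hv2]; linear_combination hz
    · show B 3 = ((B 0 - B 1) / 2) * u 3 + B 5 * v 3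
      rw [hu3, hv3]; linear_combination (1 / 2 : ℂ) * hr + (1 / 2 : ℂ) * hw
    · show B 4 = ((B 0 - B 1) / 2) * u 4 + B 5 * v 4
      rw [hu4, hv4]; linear_combination (1 / 2 : ℂ) * hw - (1 / 2 : ℂ) * hr
    · show B 5 = ((B 0 - B 1) / 2) * u 5 + B 5 * v 5
      rw [hu5, hv5]; ring
  rw [hBrep]
  exact Submodule.add_mem _ (Submodule.smul_mem _ _ humem) (Submodule.smul_mem _ _ hvmem)
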